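/- Let u be a unitary in O_2 and let α : O_2 → O_2 be a unital *-homomorphism with α(S_1) = uS_1 and α(S_2) = uS_2, such that α(F) ⊆ V. Then u ∈ V if and only if α(D_2) ⊆ D_2 and α(S_1S_2*) ∈ 𝒱_2. -/

import Mathlib

open scoped BigOperators

variable {A : Type*} [CStarAlgebra A] [PartialOrder A] [StarOrderedRing A]

/-- `Sw S μ = S_{μ_1} ⋯ S_{μ_k}`. -/
def Sw {n : ℕ} (S : Fin n → A) (μ : List (Fin n)) : A := (μ.map S).prod

/-- `Pw S μ = S_μ S_μ*`. -/
def Pw {n : ℕ} (S : Fin n → A) (μ : List (Fin n)) : A := Sw S μ * star (Sw S μ)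

/-- The set 𝒱_n of finite sums ∑ S_α S_β*. -/
def Vset {n : ℕ} (S : Fin n → A) : Set A :=
  {x | ∃ J : Finset (List (Fin n) × List (Fin n)),
      x = ∑ p ∈ J, Sw S p.1 * star (Sw S p.2)}

/-- The Thompson-like group `S_n = 𝒱_n ∩ U(O_n)`; for n = 2 this is Thompson's group V. -/
def Vgrp {n : ℕ} (S : Fin n → A) : Set A := Vset S ∩ (unitary A : Set A)

/-- The diagonal D_n: closed linear span of the projections P_μ. -/
def Ddiag {n : ℕ} (S : Fin n → A) : Set A :=
  ((Submodule.span ℂ (Set.range (Pw S))).topologicalClosure : Submodule ℂ A)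

/-- Projection: self-adjoint idempotent. -/
def IsProjection (p : A) : Prop := IsSelfAdjoint p ∧ p * p = p

/-- Concatenation ν_1 ν_2 ⋯ ν_k. -/
def wcat {n : ℕ} (ν : ℕ → List (Fin n)) (k : ℕ) : List (Fin n) :=
  ((List.range k).map ν).flatten

/-- Modestly scaling endomorphism. -/
def ModestlyScaling {n : ℕ} (S : Fin n → A) (α : A →⋆ₐ[ℂ] A) : Prop :=
  ∀ ν : ℕ → List (Fin n), (∀ k, ν k ≠ []) →
    ∀ p : A, IsProjection p → (∀ k : ℕ, p ≤ α (Pw S (wcat ν (k + 1)))) → p = 0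

/-- Generator x_0 of Thompson's group F inside U(O_2). -/
def x0 (S : Fin 2 → A) : A :=
  S 0 * S 0 * star (S 0) + S 0 * S 1 * star (S 0) * star (S 1) + S 1 * star (S 1) * star (S 1)

/-- Generators x_k of Thompson's group F inside U(O_2). -/
def xgen (S : Fin 2 → A) : ℕ → A
  | 0 => x0 S
  | k + 1 => 1 - S 1 ^ (k + 1) * star (S 1 ^ (k + 1)) + S 1 ^ (k + 1) * x0 S * star (S 1 ^ (k + 1))

/-- Thompson's group F inside U(O_2): the subgroup generated by the x_k
(as a set: the submonoid generated by the x_k and their adjoints = inverses). -/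
def Fgrp (S : Fin 2 → A) : Set A :=
  (Submonoid.closure (Set.range (xgen S) ∪ star '' Set.range (xgen S)) : Set A)

/-- The extra generator for Thompson's group T. -/
def tgen (S : Fin 2 → A) : A :=
  S 1 * S 1 * star (S 0) + S 0 * star (S 0) * star (S 1) + S 1 * S 0 * star (S 1) * star (S 1)

/-- Thompson's group T inside U(O_2). -/
def Tgrp (S : Fin 2 → A) : Set A :=
  (Submonoid.closure ((Set.range (xgen S) ∪ {tgen S}) ∪
      star '' (Set.range (xgen S) ∪ {tgen S})) : Set A)

/-- `IsOneW S w p`: p is the largest projection in D_n with p w = p, i.e. p = 𝟙_w. -/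
def IsOneW {n : ℕ} (S : Fin n → A) (w p : A) : Prop :=
  p ∈ Ddiag S ∧ IsProjection p ∧ p * w = p ∧
    ∀ p' : A, p' ∈ Ddiag S → IsProjection p' → p' * w = p' → p' ≤ p

/-- min(q) = inf { |μ| : P_μ ≤ q } ∈ ℕ ∪ {∞}. -/
noncomputable def minProj {n : ℕ} (S : Fin n → A) (q : A) : ℕ∞ :=
  ⨅ μ ∈ {μ : List (Fin n) | Pw S μ ≤ q}, (μ.length : ℕ∞)

/-- The core UHF subalgebra F_n: closed linear span of {S_μ S_ν* : |μ| = |ν|}. -/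
def UHF {n : ℕ} (S : Fin n → A) : Set A :=
  ((Submodule.span ℂ {x : A | ∃ μ ν : List (Fin n), μ.length = ν.length ∧
      x = Sw S μ * star (Sw S ν)}).topologicalClosure : Submodule ℂ A)

/-- μ ≺ ν : at the first index where μ and ν differ, the letter of μ is smaller. -/
def WordLt {n : ℕ} (μ ν : List (Fin n)) : Prop :=
  ∃ σ : List (Fin n), ∃ a b : Fin n, a < b ∧ (σ ++ [a]) <+: μ ∧ (σ ++ [b]) <+: ν


section CuntzAux

variable {A : Type*} [CStarAlgebra A] [PartialOrder A] [StarOrderedRing A]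

private def Mw (S : Fin 2 → A) (p : List (Fin 2) × List (Fin 2)) : A :=
  Sw S p.1 * star (Sw S p.2)

private lemma Sw_nil (S : Fin 2 → A) : Sw S ([] : List (Fin 2)) = 1 := rfl

private lemma Sw_cons (S : Fin 2 → A) (i : Fin 2) (l : List (Fin 2)) :
    Sw S (i :: l) = S i * Sw S l := by simp [Sw]

private lemma Sw_singleton (S : Fin 2 → A) (i : Fin 2) : Sw S [i] = S i := by simp [Sw]

private lemma Sw_append (S : Fin 2 → A) (l₁ l₂ : List (Fin 2)) :
    Sw S (l₁ ++ l₂) = Sw S l₁ * Sw S l₂ := by simp [Sw]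

private lemma mem_Vset_iff (S : Fin 2 → A) {x : A} :
    x ∈ Vset S ↔ ∃ J : Finset (List (Fin 2) × List (Fin 2)), x = ∑ p ∈ J, Mw S p :=
  Iff.rfl

private lemma horth (S : Fin 2 → A) (hiso : ∀ i, star (S i) * S i = 1)
    (hsum : S 0 * star (S 0) + S 1 * star (S 1) = 1) :
    ∀ i j : Fin 2, i ≠ j → star (S i) * S j = 0 := by
  have key : ∀ i j : Fin 2, S i * star (S i) + S j * star (S j) = 1 →
      star (S i) * S j = 0 := by
    intro i j h
    have c1 : ∀ x : A, star (S i) * (S i * x) = x := fun x => by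
      rw [← mul_assoc, hiso i, one_mul]
    have h2 : star (S i) * S j = star (S i) * S j + star (S i) * S j := by
      conv_lhs => rw [← one_mul (S j), ← h]
      simp only [add_mul, mul_add, mul_assoc, c1, hiso j, mul_one]
    exact (left_eq_add.mp h2)
  intro i j hij
  fin_cases i <;> fin_cases j
  · exact absurd rfl hij
  · exact key _ _ hsum
  · exact key _ _ ((add_comm _ _).trans hsum)
  · exact absurd rfl hij

private lemma Sw_isom (S : Fin 2 → A) (hiso : ∀ i, star (S i) * S i = 1) :
    ∀ μ : List (Fin 2), star (Sw S μ) * Sw S μ = 1 := by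
  intro μ
  induction μ with
  | nil => simp [Sw_nil]
  | cons i l ih =>
    rw [Sw_cons, star_mul, mul_assoc, ← mul_assoc (star (S i)), hiso i, one_mul, ih]

private lemma starSw_mul_Sw (S : Fin 2 → A) (hiso : ∀ i, star (S i) * S i = 1)
    (hsum : S 0 * star (S 0) + S 1 * star (S 1) = 1) :
    ∀ β γ : List (Fin 2), star (Sw S β) * Sw S γ =
      if β <+: γ then Sw S (γ.drop β.length)
      else if γ <+: β then star (Sw S (β.drop γ.length)) else 0 := by
  intro β
  induction β with
  | nil => intro γ; simp [Sw_nil]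
  | cons b β ih =>
    intro γ
    cases γ with
    | nil =>
      simp [Sw_nil, List.prefix_nil, List.nil_prefix]
    | cons c γ =>
      by_cases hbc : b = c
      · subst hbc
        rw [Sw_cons, Sw_cons, star_mul, mul_assoc, ← mul_assoc (star (S b)), hiso b,
          one_mul, ih γ]
        simp [List.cons_prefix_cons]
      · rw [Sw_cons, Sw_cons, star_mul, mul_assoc, ← mul_assoc (star (S b)),
          horth S hiso hsum b c hbc, zero_mul, mul_zero]
        rw [if_neg (fun h => hbc (List.cons_prefix_cons.mp h).1),
          if_neg (fun h => hbc ((List.cons_prefix_cons.mp h).1).symm)]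

private lemma Mw_mul (S : Fin 2 → A) (hiso : ∀ i, star (S i) * S i = 1)
    (hsum : S 0 * star (S 0) + S 1 * star (S 1) = 1)
    (p q : List (Fin 2) × List (Fin 2)) :
    Mw S p * Mw S q =
      if p.2 <+: q.1 then Mw S (p.1 ++ q.1.drop p.2.length, q.2)
      else if q.1 <+: p.2 then Mw S (p.1, q.2 ++ p.2.drop q.1.length) else 0 := by
  show (Sw S p.1 * star (Sw S p.2)) * (Sw S q.1 * star (Sw S q.2)) = _
  rw [mul_assoc, ← mul_assoc (star (Sw S p.2)), starSw_mul_Sw S hiso hsum p.2 q.1]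
  split_ifs with h1 h2
  · show Sw S p.1 * (Sw S (q.1.drop p.2.length) * star (Sw S q.2)) = _
    rw [Mw, Sw_append, mul_assoc]
  · show Sw S p.1 * (star (Sw S (p.2.drop q.1.length)) * star (Sw S q.2)) = _
    rw [Mw, Sw_append, star_mul]
  · simp

private def Words : ℕ → Finset (List (Fin 2))
  | 0 => {[]}
  | (k+1) => Finset.univ.biUnion fun i : Fin 2 => ((Words k).image (List.cons i))

private lemma mem_Words : ∀ {k : ℕ} {l : List (Fin 2)}, l ∈ Words k ↔ l.length = k := by
  intro k
  induction k with
  | zero => intro l; simp [Words, List.length_eq_zero_iff]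
  | succ k ih =>
    intro l
    simp only [Words, Finset.mem_biUnion, Finset.mem_image, Finset.mem_univ, true_and]
    constructor
    · rintro ⟨i, t, ht, rfl⟩
      simp [ih.mp ht]
    · intro hl
      cases l with
      | nil => simp at hl
      | cons c t =>
        exact ⟨c, t, ih.mpr (by simpa using hl), rfl⟩

private lemma sum_Words_succ (f : List (Fin 2) → A) (k : ℕ) :
    ∑ τ ∈ Words (k+1), f τ = ∑ i : Fin 2, ∑ t ∈ Words k, f (i :: t) := by
  rw [show Words (k+1) = Finset.univ.biUnion
      (fun i : Fin 2 => ((Words k).image (List.cons i))) from rfl]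
  refine (Finset.sum_biUnion ?_).trans ?_
  · intro i _ j _ hij
    refine Finset.disjoint_left.mpr ?_
    rintro q hqi hqj
    obtain ⟨t1, _, rfl⟩ := Finset.mem_image.mp hqi
    obtain ⟨t2, _, h2⟩ := Finset.mem_image.mp hqj
    exact hij ((List.cons_eq_cons.mp h2).1.symm)
  · refine Finset.sum_congr rfl fun i _ => ?_
    exact Finset.sum_image fun a _ b _ h => by simpa using h

private lemma Mw_step (S : Fin 2 → A)
    (hsum : S 0 * star (S 0) + S 1 * star (S 1) = 1)
    (p : List (Fin 2) × List (Fin 2)) :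
    Mw S p = ∑ i : Fin 2, Mw S (p.1 ++ [i], p.2 ++ [i]) := by
  rw [Fin.sum_univ_two]
  simp only [Mw, Sw_append, Sw_singleton, star_mul]
  conv_lhs => rw [← one_mul (star (Sw S p.2)), ← hsum]
  simp only [add_mul, mul_add, mul_assoc]

private lemma Mw_refine (S : Fin 2 → A)
    (hsum : S 0 * star (S 0) + S 1 * star (S 1) = 1) :
    ∀ (k : ℕ) (p : List (Fin 2) × List (Fin 2)),
      Mw S p = ∑ τ ∈ Words k, Mw S (p.1 ++ τ, p.2 ++ τ) := by
  intro k
  induction k with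
  | zero => intro p; simp [Words]
  | succ k ih =>
    intro p
    rw [sum_Words_succ, Mw_step S hsum p]
    refine Finset.sum_congr rfl fun i _ => ?_
    rw [ih (p.1 ++ [i], p.2 ++ [i])]
    refine Finset.sum_congr rfl fun t _ => ?_
    simp [List.append_assoc]

private lemma Vset_Mw (S : Fin 2 → A) (p : List (Fin 2) × List (Fin 2)) :
    Mw S p ∈ Vset S :=
  (mem_Vset_iff S).mpr ⟨{p}, by simp⟩

private lemma Vset_zero (S : Fin 2 → A) : (0 : A) ∈ Vset S :=
  (mem_Vset_iff S).mpr ⟨∅, by simp⟩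

private lemma Vset_one (S : Fin 2 → A) : (1 : A) ∈ Vset S :=
  (mem_Vset_iff S).mpr ⟨{([], [])}, by simp [Mw, Sw_nil]⟩

private lemma Vset_S (S : Fin 2 → A) (i : Fin 2) : S i ∈ Vset S :=
  (mem_Vset_iff S).mpr ⟨{([i], [])}, by simp [Mw, Sw_nil, Sw_singleton]⟩

private lemma Vset_star (S : Fin 2 → A) {x : A} (hx : x ∈ Vset S) : star x ∈ Vset S := by
  classical
  obtain ⟨J, rfl⟩ := (mem_Vset_iff S).mp hx
  refine (mem_Vset_iff S).mpr ⟨J.image Prod.swap, ?_⟩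
  rw [Finset.sum_image (fun a _ b _ h => Prod.swap_injective h), star_sum]
  exact Finset.sum_congr rfl fun p _ => by simp [Mw, star_mul]

private lemma Vset_add_Mw (S : Fin 2 → A)
    (hsum : S 0 * star (S 0) + S 1 * star (S 1) = 1)
    (p : List (Fin 2) × List (Fin 2)) {y : A} (hy : y ∈ Vset S) :
    Mw S p + y ∈ Vset S := by
  classical
  obtain ⟨J, rfl⟩ := (mem_Vset_iff S).mp hy
  set B := J.sup fun q => q.2.length with hB
  set k := B + 1 with hk
  set F : Finset (List (Fin 2) × List (Fin 2)) :=
    (Words k).image (fun τ => (p.1 ++ τ, p.2 ++ τ)) with hF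
  have hFsum : Mw S p = ∑ q ∈ F, Mw S q := by
    rw [hF, Finset.sum_image (fun τ₁ _ τ₂ _ h =>
      List.append_cancel_left (congrArg Prod.fst h))]
    exact Mw_refine S hsum k p
  have hdisj : Disjoint F J := by
    rw [Finset.disjoint_left]
    rintro q hqF hqJ
    obtain ⟨τ, hτ, rfl⟩ := Finset.mem_image.mp hqF
    have h1 : (p.2 ++ τ).length = p.2.length + k := by
      rw [List.length_append, mem_Words.mp hτ]
    have h2 : ((p.1 ++ τ, p.2 ++ τ) : List (Fin 2) × List (Fin 2)).2.length ≤ B :=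
      Finset.le_sup (f := fun q : List (Fin 2) × List (Fin 2) => q.2.length) hqJ
    simp only at h2
    omega
  exact (mem_Vset_iff S).mpr ⟨F ∪ J, by rw [Finset.sum_union hdisj, ← hFsum]⟩

private lemma Vset_add (S : Fin 2 → A)
    (hsum : S 0 * star (S 0) + S 1 * star (S 1) = 1)
    {x y : A} (hx : x ∈ Vset S) (hy : y ∈ Vset S) : x + y ∈ Vset S := by
  classical
  obtain ⟨J, rfl⟩ := (mem_Vset_iff S).mp hx
  clear hx
  induction J using Finset.induction_on with
  | empty => simpa using hy
  | @insert a s ha ih =>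
    rw [Finset.sum_insert ha, add_assoc]
    exact Vset_add_Mw S hsum _ ih

private lemma Vset_mul (S : Fin 2 → A) (hiso : ∀ i, star (S i) * S i = 1)
    (hsum : S 0 * star (S 0) + S 1 * star (S 1) = 1)
    {x y : A} (hx : x ∈ Vset S) (hy : y ∈ Vset S) : x * y ∈ Vset S := by
  classical
  obtain ⟨J, rfl⟩ := (mem_Vset_iff S).mp hx
  obtain ⟨J', rfl⟩ := (mem_Vset_iff S).mp hy
  rw [Finset.sum_mul_sum]
  refine Finset.sum_induction _ (· ∈ Vset S)
    (fun a b ha hb => Vset_add S hsum ha hb) (Vset_zero S) ?_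
  intro p _
  refine Finset.sum_induction _ (· ∈ Vset S)
    (fun a b ha hb => Vset_add S hsum ha hb) (Vset_zero S) ?_
  intro q _
  rw [Mw_mul S hiso hsum p q]
  split_ifs
  · exact Vset_Mw S _
  · exact Vset_Mw S _
  · exact Vset_zero S

private lemma Pw_eq_Mw (S : Fin 2 → A) (μ : List (Fin 2)) : Pw S μ = Mw S (μ, μ) := rfl

private lemma Pw_idem (S : Fin 2 → A) (hiso : ∀ i, star (S i) * S i = 1)
    (μ : List (Fin 2)) : Pw S μ * Pw S μ = Pw S μ := by
  show (Sw S μ * star (Sw S μ)) * (Sw S μ * star (Sw S μ)) = _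
  rw [mul_assoc, ← mul_assoc (star (Sw S μ)), Sw_isom S hiso, one_mul]
  rfl

private lemma Pw_star (S : Fin 2 → A) (μ : List (Fin 2)) : star (Pw S μ) = Pw S μ := by
  simp [Pw, star_mul]

private lemma sum_Pw_Words (S : Fin 2 → A)
    (hsum : S 0 * star (S 0) + S 1 * star (S 1) = 1) :
    ∀ N : ℕ, ∑ δ ∈ Words N, Pw S δ = 1 := by
  intro N
  induction N with
  | zero => simp [Words, Pw, Sw_nil]
  | succ N ih =>
    rw [sum_Words_succ (fun δ => Pw S δ) N]
    have hstep : ∀ i : Fin 2, ∑ t ∈ Words N, Pw S (i :: t) = S i * star (S i) := by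
      intro i
      have hPw : ∀ t : List (Fin 2), Pw S (i :: t) = S i * Pw S t * star (S i) := by
        intro t
        simp only [Pw, Sw_cons, star_mul, mul_assoc]
      rw [Finset.sum_congr rfl fun t _ => hPw t, ← Finset.sum_mul, ← Finset.mul_sum, ih,
        mul_one]
    rw [Finset.sum_congr rfl fun i _ => hstep i, Fin.sum_univ_two, hsum]

private def tw (T : ℕ) : List (Fin 2) := List.replicate T 0 ++ [1]

private lemma tw_length (T : ℕ) : (tw T).length = T + 1 := by simp [tw]

private lemma tw_not_prefix {σ : List (Fin 2)} (hσ : σ ≠ []) {T : ℕ}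
    (hlen : σ.length ≤ T) : ¬ (tw T <+: σ ++ tw T) := by
  intro h
  have hσpre : σ <+: tw T :=
    List.prefix_of_prefix_length_le (σ.prefix_append (tw T)) h
      (by rw [tw_length]; omega)
  have hσeq : σ = List.replicate σ.length (0 : Fin 2) := by
    refine List.eq_replicate_iff.mpr ⟨rfl, fun b hb => ?_⟩
    have h1 : σ = (tw T).take σ.length := List.prefix_iff_eq_take.mp hσpre
    rw [h1] at hb
    rw [show tw T = List.replicate T 0 ++ [1] from rfl,
      List.take_append_of_le_length (by simpa using hlen), List.take_replicate] at hb
    exact List.eq_of_mem_replicate hb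
  obtain ⟨r, hr⟩ := h
  have hL : σ ++ tw T = List.replicate (σ.length + T) (0 : Fin 2) ++ [1] := by
    conv_lhs => rw [hσeq]
    rw [show tw T = List.replicate T 0 ++ [1] from rfl, ← List.append_assoc,
      ← List.replicate_add]
  have hσpos : 0 < σ.length := List.length_pos_iff.mpr hσ
  have hTlt : T < (σ ++ tw T).length := by
    rw [List.length_append, tw_length]; omega
  have e1 : (σ ++ tw T)[T] = (0 : Fin 2) := by
    rw [List.getElem_of_eq hL hTlt,
      List.getElem_append_left (by simp; omega)]
    exact List.getElem_replicate _
  have e2 : (σ ++ tw T)[T] = (1 : Fin 2) := by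
    rw [List.getElem_of_eq hr.symm hTlt,
      List.getElem_append_left (by rw [tw_length]; omega)]
    show (List.replicate T (0 : Fin 2) ++ [1])[T]'(by simp) = 1
    rw [List.getElem_append_right (by simp)]
    simp
  rw [e1] at e2
  exact absurd e2 (by decide)

private lemma Pw_tw_mul (S : Fin 2 → A) (hiso : ∀ i, star (S i) * S i = 1)
    (hsum : S 0 * star (S 0) + S 1 * star (S 1) = 1)
    {σ : List (Fin 2)} (hσ : σ ≠ []) {T : ℕ} (hlen : σ.length ≤ T) :
    Pw S (tw T) * Sw S σ * Pw S (tw T) = 0 := by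
  have h := starSw_mul_Sw S hiso hsum (tw T) (σ ++ tw T)
  rw [if_neg (tw_not_prefix hσ hlen), if_neg ?h2] at h
  case h2 =>
    intro hpre
    have hle := hpre.length_le
    rw [List.length_append, tw_length] at hle
    exact hσ (List.length_eq_zero_iff.mp (by omega))
  have hc : ∀ x : A, Sw S σ * (Sw S (tw T) * x) = Sw S (σ ++ tw T) * x := by
    intro x; rw [Sw_append, mul_assoc]
  have hz : ∀ x : A, star (Sw S (tw T)) * (Sw S (σ ++ tw T) * x) = 0 := by
    intro x; rw [← mul_assoc, h, zero_mul]
  show (Sw S (tw T) * star (Sw S (tw T))) * Sw S σ * (Sw S (tw T) * star (Sw S (tw T))) = 0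
  simp only [mul_assoc]
  rw [hc, hz, mul_zero]

private lemma word_sum_isometry (S : Fin 2 → A) (hiso : ∀ i, star (S i) * S i = 1)
    (hsum : S 0 * star (S 0) + S 1 * star (S 1) = 1) (h1ne : (1 : A) ≠ 0)
    {ι : Type} [DecidableEq ι] (K : Finset ι) (g : ι → List (Fin 2))
    (hisom : star (∑ i ∈ K, Sw S (g i)) * (∑ i ∈ K, Sw S (g i)) = 1) :
    ∃ ρ : List (Fin 2), (∑ i ∈ K, Sw S (g i)) = Sw S ρ := by
  classical
  set T := (K.sup fun i => (g i).length) + 1 with hT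
  have hPne : Pw S (tw T) ≠ 0 := by
    intro h0
    have hI := Sw_isom S hiso (tw T)
    have h2 : star (Sw S (tw T)) * Pw S (tw T) * Sw S (tw T) = 1 := by
      rw [Pw, ← mul_assoc (star (Sw S (tw T))), hI, one_mul, hI]
    rw [h0, mul_zero, zero_mul] at h2
    exact h1ne h2.symm
  have key : ∀ i ∈ K, ∀ j ∈ K,
      Pw S (tw T) * (star (Sw S (g i)) * Sw S (g j)) * Pw S (tw T)
      = if g i = g j then Pw S (tw T) else 0 := by
    intro i hi j hj
    by_cases hij : g i = g j
    · rw [if_pos hij, hij, Sw_isom S hiso, mul_one, Pw_idem S hiso]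
    · rw [if_neg hij, starSw_mul_Sw S hiso hsum]
      split_ifs with hp1 hp2
      · refine Pw_tw_mul S hiso hsum ?_ ?_
        · intro hnil
          rw [List.drop_eq_nil_iff] at hnil
          exact hij (hp1.eq_of_length (le_antisymm hp1.length_le hnil))
        · have hb : (g j).length ≤ K.sup fun i => (g i).length := by
            exact Finset.le_sup (f := fun i => (g i).length) hj
          rw [List.length_drop]
          omega
      · have hσne : (g i).drop (g j).length ≠ [] := by
          intro hnil
          rw [List.drop_eq_nil_iff] at hnil
          exact hij (hp2.eq_of_length (le_antisymm hp2.length_le hnil)).symm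
        have hσlen : ((g i).drop (g j).length).length ≤ T := by
          have hb : (g i).length ≤ K.sup fun i => (g i).length := by
            exact Finset.le_sup (f := fun i => (g i).length) hi
          rw [List.length_drop]
          omega
        have hz := Pw_tw_mul S hiso hsum (T := T) hσne hσlen
        have hrw : Pw S (tw T) * star (Sw S ((g i).drop (g j).length)) * Pw S (tw T)
            = star (Pw S (tw T) * Sw S ((g i).drop (g j).length) * Pw S (tw T)) := by
          simp only [star_mul, Pw_star, mul_assoc]
        rw [hrw, hz, star_zero]
      · simp
  have hsmul : ∀ i j : ι, (if g i = g j then Pw S (tw T) else 0)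
      = (if g i = g j then (1 : ℕ) else 0) • Pw S (tw T) := by
    intro i j; split <;> simp
  set n : ℕ := ∑ i ∈ K, ∑ j ∈ K, if g i = g j then 1 else 0 with hn
  have main : Pw S (tw T) = n • Pw S (tw T) := by
    have expand : Pw S (tw T) * (star (∑ i ∈ K, Sw S (g i)) * (∑ i ∈ K, Sw S (g i)))
        * Pw S (tw T) = Pw S (tw T) := by
      rw [hisom, mul_one, Pw_idem S hiso]
    calc Pw S (tw T)
        = Pw S (tw T) * (star (∑ i ∈ K, Sw S (g i)) * (∑ i ∈ K, Sw S (g i)))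
          * Pw S (tw T) := expand.symm
      _ = ∑ i ∈ K, ∑ j ∈ K,
            Pw S (tw T) * (star (Sw S (g i)) * Sw S (g j)) * Pw S (tw T) := by
          rw [star_sum, Finset.sum_mul_sum, Finset.mul_sum, Finset.sum_mul]
          refine Finset.sum_congr rfl fun i _ => ?_
          rw [Finset.mul_sum, Finset.sum_mul]
      _ = ∑ i ∈ K, ∑ j ∈ K, (if g i = g j then (1 : ℕ) else 0) • Pw S (tw T) := by
          refine Finset.sum_congr rfl fun i hi => Finset.sum_congr rfl fun j hj => ?_
          rw [key i hi j hj, hsmul]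
      _ = n • Pw S (tw T) := by
          rw [hn]
          simp only [Finset.sum_smul]
  have hn1 : n = 1 := by
    have hsub : ((n : ℂ) - 1) • Pw S (tw T) = 0 := by
      rw [sub_smul, one_smul, Nat.cast_smul_eq_nsmul, ← main, sub_self]
    rcases smul_eq_zero.mp hsub with h | h
    · have : (n : ℂ) = 1 := by linear_combination h
      exact_mod_cast this
    · exact absurd h hPne
  have hcard : K.card ≤ 1 := by
    have : K.card = ∑ i ∈ K, 1 := by simp
    rw [← hn1, hn, this]
    refine Finset.sum_le_sum fun i hi => ?_
    refine Finset.single_le_sum (f := fun j => if g i = g j then 1 else 0)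
      (fun j _ => Nat.zero_le _) hi |>.trans_eq' ?_
    simp
  interval_cases h : K.card
  · rw [Finset.card_eq_zero.mp h] at hisom
    simp at hisom
    exact absurd hisom.symm h1ne
  · obtain ⟨i0, rfl⟩ := Finset.card_eq_one.mp h
    exact ⟨g i0, Finset.sum_singleton _ _⟩

private lemma isometry_range_diag (S : Fin 2 → A) (hiso : ∀ i, star (S i) * S i = 1)
    (hsum : S 0 * star (S 0) + S 1 * star (S 1) = 1) (h1ne : (1 : A) ≠ 0)
    {m : A} (hm : m ∈ Vset S) (hisom : star m * m = 1) :
    m * star m ∈ Submodule.span ℂ (Set.range (Pw S)) := by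
  classical
  obtain ⟨J, rfl⟩ := (mem_Vset_iff S).mp hm
  set m : A := ∑ p ∈ J, Mw S p with hm'
  set N := J.sup fun p => p.2.length with hN
  have key : ∀ δ ∈ Words N, ∃ ρ, m * Sw S δ = Sw S ρ := by
    intro δ hδ
    have hδlen : δ.length = N := mem_Words.mp hδ
    have hterm : ∀ p ∈ J, Mw S p * Sw S δ =
        if p.2 <+: δ then Sw S (p.1 ++ δ.drop p.2.length) else 0 := by
      intro p hp
      have hq : Sw S δ = Mw S (δ, []) := by simp [Mw, Sw_nil]
      rw [hq, Mw_mul S hiso hsum]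
      split_ifs with h1 h2
      · simp [Mw, Sw_nil]
      · exfalso
        have hle : p.2.length ≤ δ.length := by
          rw [hδlen]; exact Finset.le_sup (f := fun p : _ × _ => p.2.length) hp
        have heq : δ = p.2 := h2.eq_of_length (le_antisymm h2.length_le hle)
        exact h1 (heq ▸ List.prefix_refl δ)
      · rfl
    have hexp : m * Sw S δ =
        ∑ p ∈ J.filter (fun p => p.2 <+: δ), Sw S (p.1 ++ δ.drop p.2.length) := by
      rw [hm', Finset.sum_mul, Finset.sum_congr rfl hterm,
        ← Finset.sum_filter (fun p : _ × _ => p.2 <+: δ)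
          (fun p => Sw S (p.1 ++ δ.drop p.2.length))]
    rw [hexp]
    refine word_sum_isometry S hiso hsum h1ne _ _ ?_
    rw [← hexp, star_mul, mul_assoc, ← mul_assoc (star m), hisom, one_mul,
      Sw_isom S hiso]
  have hsplit : m * star m = ∑ δ ∈ Words N, (m * Sw S δ) * star (m * Sw S δ) := by
    calc m * star m = m * (∑ δ ∈ Words N, Pw S δ) * star m := by
          rw [sum_Pw_Words S hsum, mul_one]
      _ = ∑ δ ∈ Words N, (m * Sw S δ) * star (m * Sw S δ) := by
          rw [Finset.mul_sum, Finset.sum_mul]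
          refine Finset.sum_congr rfl fun δ _ => ?_
          simp only [Pw, star_mul, mul_assoc]
  rw [hsplit]
  refine Submodule.sum_mem _ fun δ hδ => ?_
  obtain ⟨ρ, hρ⟩ := key δ hδ
  rw [hρ]
  exact Submodule.subset_span ⟨ρ, rfl⟩

end CuntzAux

theorem stmt_17 {A : Type*} [CStarAlgebra A] [PartialOrder A] [StarOrderedRing A]
    (S : Fin 2 → A)
    (hiso : ∀ i, star (S i) * S i = 1)
    (hsum : S 0 * star (S 0) + S 1 * star (S 1) = 1)
    (hgen : (StarAlgebra.adjoin ℂ (Set.range S)).topologicalClosure = ⊤)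
    (u : A) (hu : u ∈ unitary A)
    (α : A →⋆ₐ[ℂ] A) (hα : ∀ i, α (S i) = u * S i)
    (hF : ∀ w ∈ Fgrp S, α w ∈ Vgrp S) :
    u ∈ Vgrp S ↔
      (∀ x ∈ Ddiag S, α x ∈ Ddiag S) ∧ α (S 0 * star (S 1)) ∈ Vset S := by
  classical
  rcases subsingleton_or_nontrivial A with hA | hA
  · refine iff_of_true ⟨⟨∅, Subsingleton.elim _ _⟩, hu⟩
      ⟨fun x _ => ?_, ⟨∅, Subsingleton.elim _ _⟩⟩
    have h0 : α x = 0 := Subsingleton.elim _ _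
    rw [h0]
    show (0 : A) ∈ (((Submodule.span ℂ (Set.range (Pw S))).topologicalClosure :
      Submodule ℂ A) : Set A)
    exact Submodule.zero_mem _
  · have h1ne : (1 : A) ≠ 0 := one_ne_zero
    have huu : star u * u = 1 := (Unitary.mem_iff.mp hu).1
    have huu' : u * star u = 1 := (Unitary.mem_iff.mp hu).2
    constructor
    · rintro ⟨huV, -⟩
      constructor
      · -- α preserves the diagonal
        have hcont : Continuous ⇑α := AddMonoidHomClass.continuous_of_bound α 1
          fun x => by simpa [one_mul] using NonUnitalStarAlgHom.norm_apply_le α x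
        have hαSw_mem : ∀ μ : List (Fin 2), α (Sw S μ) ∈ Vset S := by
          intro μ
          induction μ with
          | nil => rw [Sw_nil, map_one]; exact Vset_one S
          | cons i l ih =>
            rw [Sw_cons, map_mul, hα]
            exact Vset_mul S hiso hsum (Vset_mul S hiso hsum huV (Vset_S S i)) ih
        have hαP : ∀ μ : List (Fin 2),
            α (Pw S μ) ∈ Submodule.span ℂ (Set.range (Pw S)) := by
          intro μ
          have hPμ : α (Pw S μ) = α (Sw S μ) * star (α (Sw S μ)) := by
            rw [Pw, map_mul, map_star]
          rw [hPμ]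
          refine isometry_range_diag S hiso hsum h1ne (hαSw_mem μ) ?_
          rw [← map_star, ← map_mul, Sw_isom S hiso, map_one]
        intro x hx
        have hx' : x ∈ closure
            ((Submodule.span ℂ (Set.range (Pw S)) : Submodule ℂ A) : Set A) := by
          have hx2 : x ∈ (((Submodule.span ℂ (Set.range (Pw S))).topologicalClosure :
              Submodule ℂ A) : Set A) := hx
          rwa [Submodule.topologicalClosure_coe] at hx2
        have hmaps : Set.MapsTo ⇑α
            ((Submodule.span ℂ (Set.range (Pw S)) : Submodule ℂ A) : Set A)
            ((Submodule.span ℂ (Set.range (Pw S)) : Submodule ℂ A) : Set A) := by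
          intro y hy
          have hy' : y ∈ Submodule.span ℂ (Set.range (Pw S)) := hy
          show α y ∈ Submodule.span ℂ (Set.range (Pw S))
          refine Submodule.span_induction
            (p := fun z _ => α z ∈ Submodule.span ℂ (Set.range (Pw S)))
            ?_ ?_ ?_ ?_ hy'
          · rintro z ⟨μ, rfl⟩
            exact hαP μ
          · show α (0 : A) ∈ Submodule.span ℂ (Set.range (Pw S))
            rw [map_zero]; exact Submodule.zero_mem _
          · intro b c _ _ hb hc
            show α (b + c) ∈ Submodule.span ℂ (Set.range (Pw S))
            rw [map_add]; exact Submodule.add_mem _ hb hc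
          · intro c b _ hb
            show α (c • b) ∈ Submodule.span ℂ (Set.range (Pw S))
            rw [map_smul]; exact Submodule.smul_mem _ _ hb
        have hmem := map_mem_closure hcont hx' hmaps
        show α x ∈ (((Submodule.span ℂ (Set.range (Pw S))).topologicalClosure :
          Submodule ℂ A) : Set A)
        rwa [Submodule.topologicalClosure_coe]
      · have heq : α (S 0 * star (S 1)) = u * S 0 * (star (S 1) * star u) := by
          rw [map_mul, map_star, hα, hα, star_mul]
        rw [heq]
        exact Vset_mul S hiso hsum (Vset_mul S hiso hsum huV (Vset_S S 0))
          (Vset_mul S hiso hsum (Vset_star S (Vset_S S 1)) (Vset_star S huV))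
    · rintro ⟨-, hV⟩
      set a := u * S 0 with ha
      set w := u * S 1 with hw
      have ra : star a * a = 1 := by
        rw [ha, star_mul, mul_assoc, ← mul_assoc (star u), huu, one_mul, hiso 0]
      have rw2 : star w * w = 1 := by
        rw [hw, star_mul, mul_assoc, ← mul_assoc (star u), huu, one_mul, hiso 1]
      have raw : star a * w = 0 := by
        rw [ha, hw, star_mul, mul_assoc, ← mul_assoc (star u), huu, one_mul,
          horth S hiso hsum 0 1 (by decide)]
      have rwa' : star w * a = 0 := by
        rw [ha, hw, star_mul, mul_assoc, ← mul_assoc (star u), huu, one_mul,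
          horth S hiso hsum 1 0 (by decide)]
      have hmid : ∀ i : Fin 2, (u * S i) * star (u * S i)
          = u * (S i * star (S i)) * star u := by
        intro i; rw [star_mul]; simp only [mul_assoc]
      have rsum : a * star a + w * star w = 1 := by
        rw [ha, hw, hmid 0, hmid 1, ← add_mul, ← mul_add, hsum, mul_one, huu']
      have hv : a * star w ∈ Vset S := by
        have heq : α (S 0 * star (S 1)) = a * star w := by
          rw [map_mul, map_star, hα, hα, ← ha, ← hw]
        rwa [heq] at hV
      have hx0mem : x0 S ∈ Fgrp S :=
        Submonoid.subset_closure (Set.mem_union_left _ ⟨0, rfl⟩)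
      have hXeq : α (x0 S)
          = a * a * star a + a * w * star a * star w + w * star w * star w := by
        simp only [x0, map_add, map_mul, map_star, hα, ← ha, ← hw]
      have hX : a * a * star a + a * w * star a * star w + w * star w * star w
          ∈ Vset S := hXeq ▸ (hF _ hx0mem).1
      set X := a * a * star a + a * w * star a * star w + w * star w * star w
        with hXdef
      have caa : ∀ x : A, star a * (a * x) = x := fun x => by
        rw [← mul_assoc, ra, one_mul]
      have cww : ∀ x : A, star w * (w * x) = x := fun x => by
        rw [← mul_assoc, rw2, one_mul]
      have caw : ∀ x : A, star a * (w * x) = 0 := fun x => by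
        rw [← mul_assoc, raw, zero_mul]
      have cwa : ∀ x : A, star w * (a * x) = 0 := fun x => by
        rw [← mul_assoc, rwa', zero_mul]
      have hT : star (a * star w) * X * ((a * star w) * star (a * star w))
          = w * (a * star a) := by
        simp only [hXdef, star_mul, star_star, mul_add, add_mul, mul_assoc,
          caa, cww, caw, cwa, ra, rw2, raw, rwa', mul_zero, zero_mul,
          add_zero, zero_add, mul_one, one_mul]
      have ht : star ((star (a * star w) * (a * star w)) * X)
          = w * (w * star w) := by
        simp only [hXdef, star_mul, star_star, star_add, mul_add, add_mul,
          mul_assoc, caa, cww, caw, cwa, ra, rw2, raw, rwa', mul_zero,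
          zero_mul, add_zero, zero_add, mul_one, one_mul]
      have hwV : w ∈ Vset S := by
        have hid : w = star (a * star w) * X * ((a * star w) * star (a * star w))
            + star ((star (a * star w) * (a * star w)) * X) := by
          rw [hT, ht, ← mul_add, rsum, mul_one]
        rw [hid]
        have hsv : star (a * star w) ∈ Vset S := Vset_star S hv
        exact Vset_add S hsum
          (Vset_mul S hiso hsum (Vset_mul S hiso hsum hsv hX)
            (Vset_mul S hiso hsum hv hsv))
          (Vset_star S (Vset_mul S hiso hsum (Vset_mul S hiso hsum hsv hv) hX))
      have huVset : u ∈ Vset S := by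
        have h1 : (a * star w) * w = a := by rw [mul_assoc, rw2, mul_one]
        have hu_eq : u = (a * star w) * w * star (S 0) + w * star (S 1) := by
          rw [h1, ha, hw, mul_assoc, mul_assoc, ← mul_add, hsum, mul_one]
        rw [hu_eq]
        exact Vset_add S hsum
          (Vset_mul S hiso hsum (Vset_mul S hiso hsum hv hwV)
            (Vset_star S (Vset_S S 0)))
          (Vset_mul S hiso hsum hwV (Vset_star S (Vset_S S 1)))
      exact ⟨huVset, hu⟩
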